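/- Fix bits x, y, t, h₁, h₂, p ∈ ZMod 2. Let v = (H e_t) ⊗ (H e_x) ∈ ℂ² ⊗ ℂ² be the X-basis state prepared by Alice (case s = 1 of Protocol 1), and let U = (Z^p ⊗ Z^p) · (Y^{h₁} ⊗ Y^{h₂}) · CNOT^{1-y} be Bob's operation (the CNOT is applied exactly when y = 0). Then there exist bits m₁, m₂ ∈ ZMod 2 and a complex number c with ‖c‖ = 1 such that U v = c • ((H e_{m₁}) ⊗ (H e_{m₂})) and m₁ + m₂ + t = x * y + h₁ + h₂. In particular, Alice's X-basis measurement outcomes are deterministic and her output bit m₁ + m₂ + t equals x·y plus Bob's output bit h₁ + h₂. -/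

import Mathlib

open Matrix Kronecker

noncomputable section

/-- Computational basis state of a qubit, indexed by `ZMod 2`. -/
def ket (b : ZMod 2) : ZMod 2 → ℂ := fun i => if i = b then 1 else 0

/-- Tensor product of two single-qubit states. -/
def tens (v w : ZMod 2 → ℂ) : ZMod 2 × ZMod 2 → ℂ := fun p => v p.1 * w p.2

def Yg : Matrix (ZMod 2) (ZMod 2) ℂ := !![0, -Complex.I; Complex.I, 0]

def Zg : Matrix (ZMod 2) (ZMod 2) ℂ := !![1, 0; 0, -1]

/-- The Hadamard gate. -/
def Hg : Matrix (ZMod 2) (ZMod 2) ℂ := (Real.sqrt 2 : ℂ)⁻¹ • !![1, 1; 1, -1]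

/-- The CNOT gate (first qubit is the control): sends `e_a ⊗ e_b` to `e_a ⊗ e_{a+b}`. -/
def CNOT : Matrix (ZMod 2 × ZMod 2) (ZMod 2 × ZMod 2) ℂ :=
  Matrix.of fun i j => if i.1 = j.1 ∧ i.2 = j.1 + j.2 then 1 else 0

lemma two (p : ZMod 2) : p = 0 ∨ p = 1 := by revert p; decide

lemma v0 : (0 : ZMod 2).val = 0 := rfl
lemma v1 : (1 : ZMod 2).val = 1 := rfl
lemma v2 : (2 : ZMod 2).val = 0 := rfl
lemma e2 : (2 : ZMod 2) = 0 := rfl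

lemma sum2 (f : ZMod 2 → ℂ) : ∑ i, f i = f 0 + f 1 := by
  rw [show (Finset.univ : Finset (ZMod 2)) = {0, 1} from by decide,
    Finset.sum_pair (by decide)]

lemma m00 (a b c d : ℂ) : !![a, b; c, d] (0 : ZMod 2) (0 : ZMod 2) = a := rfl
lemma m01 (a b c d : ℂ) : !![a, b; c, d] (0 : ZMod 2) (1 : ZMod 2) = b := rfl
lemma m10 (a b c d : ℂ) : !![a, b; c, d] (1 : ZMod 2) (0 : ZMod 2) = c := rfl
lemma m11 (a b c d : ℂ) : !![a, b; c, d] (1 : ZMod 2) (1 : ZMod 2) = d := rfl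
lemma s00 : (((Real.sqrt 2 : ℂ)⁻¹ • !![1, 1; 1, -1] : Matrix (ZMod 2) (ZMod 2) ℂ)) (0 : ZMod 2) (0 : ZMod 2) = (Real.sqrt 2 : ℂ)⁻¹ := by
  change (Real.sqrt 2 : ℂ)⁻¹ * (1 : ℂ) = _; ring
lemma s01 : (((Real.sqrt 2 : ℂ)⁻¹ • !![1, 1; 1, -1] : Matrix (ZMod 2) (ZMod 2) ℂ)) (0 : ZMod 2) (1 : ZMod 2) = (Real.sqrt 2 : ℂ)⁻¹ := by
  change (Real.sqrt 2 : ℂ)⁻¹ * (1 : ℂ) = _; ring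
lemma s10 : (((Real.sqrt 2 : ℂ)⁻¹ • !![1, 1; 1, -1] : Matrix (ZMod 2) (ZMod 2) ℂ)) (1 : ZMod 2) (0 : ZMod 2) = (Real.sqrt 2 : ℂ)⁻¹ := by
  change (Real.sqrt 2 : ℂ)⁻¹ * (1 : ℂ) = _; ring
lemma s11 : (((Real.sqrt 2 : ℂ)⁻¹ • !![1, 1; 1, -1] : Matrix (ZMod 2) (ZMod 2) ℂ)) (1 : ZMod 2) (1 : ZMod 2) = -(Real.sqrt 2 : ℂ)⁻¹ := by
  change (Real.sqrt 2 : ℂ)⁻¹ * (-1 : ℂ) = _; ring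

def xb (b : ZMod 2) : ZMod 2 → ℂ := fun i => (Real.sqrt 2 : ℂ)⁻¹ * (-1) ^ (i.val * b.val)

lemma Hket (b : ZMod 2) : Hg.mulVec (ket b) = xb b := by
  funext i
  simp only [Hg, mulVec, dotProduct, sum2, ket, xb]
  rcases two b with rfl | rfl <;> rcases two i with rfl | rfl <;>
    norm_num [s00, s01, s10, s11, m00, m01, m10, m11, v0, v1, v2]

lemma Z_xb (b : ZMod 2) : Zg.mulVec (xb b) = xb (b + 1) := by
  funext i
  simp only [Zg, mulVec, dotProduct, sum2, xb]
  rcases two b with rfl | rfl <;> rcases two i with rfl | rfl <;>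
    norm_num [m00, m01, m10, m11, v0, v1, v2] <;> ring_nf <;> norm_num

lemma Y_xb (b : ZMod 2) :
    Yg.mulVec (xb b) = (Complex.I * (-1) ^ (b.val + 1)) • xb (b + 1) := by
  funext i
  simp only [Yg, mulVec, dotProduct, sum2, xb, Pi.smul_apply, smul_eq_mul]
  rcases two b with rfl | rfl <;> rcases two i with rfl | rfl <;>
    norm_num [m00, m01, m10, m11, v0, v1, v2] <;> ring_nf <;> norm_num

lemma Zpow (q b : ZMod 2) : (Zg ^ q.val).mulVec (xb b) = xb (b + q) := by
  rcases two q with rfl | rfl <;>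
    simp [v0, v1, pow_zero, pow_one, Matrix.one_mulVec, Z_xb]

lemma Ypow (h b : ZMod 2) :
    (Yg ^ h.val).mulVec (xb b)
      = (Complex.I ^ h.val * (-1) ^ (h.val * (b.val + 1))) • xb (b + h) := by
  rcases two h with rfl | rfl <;>
    simp [v0, v1, pow_zero, pow_one, Matrix.one_mulVec, Y_xb]

lemma kron_tens (A B : Matrix (ZMod 2) (ZMod 2) ℂ) (v w : ZMod 2 → ℂ) :
    (A ⊗ₖ B).mulVec (tens v w) = tens (A.mulVec v) (B.mulVec w) := by
  funext ij
  obtain ⟨i, j⟩ := ij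
  simp only [mulVec, dotProduct, tens, kroneckerMap_apply, Fintype.sum_prod_type]
  rw [Finset.sum_mul_sum]
  exact Finset.sum_congr rfl fun a _ => Finset.sum_congr rfl fun c _ => by ring

lemma tens_smul (c d : ℂ) (v w : ZMod 2 → ℂ) :
    tens (c • v) (d • w) = (c * d) • tens v w := by
  funext ij; simp [tens]; ring

lemma CNOT_tens (a b : ZMod 2) :
    CNOT.mulVec (tens (xb a) (xb b)) = tens (xb (a + b)) (xb b) := by
  funext ij
  obtain ⟨i, j⟩ := ij
  simp only [mulVec, dotProduct, CNOT, tens, Fintype.sum_prod_type, of_apply, xb]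
  rcases two a with rfl | rfl <;> rcases two b with rfl | rfl <;>
    rcases two i with rfl | rfl <;> rcases two j with rfl | rfl <;>
    simp [sum2, v0, v1, v2, e2, show (1:ZMod 2)+1 = 0 from rfl] <;> ring_nf <;> norm_num

lemma CNOTpow (y a b : ZMod 2) :
    (CNOT ^ (1 - y).val).mulVec (tens (xb a) (xb b))
      = tens (xb (a + b * (1 - y))) (xb b) := by
  rcases two y with rfl | rfl <;>
    simp [v0, v1, pow_zero, pow_one, Matrix.one_mulVec, CNOT_tens]

/-- Correctness of Protocol 1 in the case `s = 1`: Alice prepares `|t̃⟩|x̃⟩` (X basis),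
Bob applies `(Z^p ⊗ Z^p)(Y^{h₁} ⊗ Y^{h₂}) CNOT^{1-y}`; the result is, up to a unit
phase, an X-basis state `(H e_{m₁}) ⊗ (H e_{m₂})` with `m₁ + m₂ + t = x·y + h₁ + h₂`. -/
theorem protocol1_correct_s1 (x y t h₁ h₂ p : ZMod 2) :
    ∃ (m₁ m₂ : ZMod 2) (c : ℂ), ‖c‖ = 1 ∧
      (((Zg ^ p.val) ⊗ₖ (Zg ^ p.val)) * ((Yg ^ h₁.val) ⊗ₖ (Yg ^ h₂.val))
          * CNOT ^ (1 - y).val).mulVec (tens (Hg.mulVec (ket t)) (Hg.mulVec (ket x)))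
        = c • tens (Hg.mulVec (ket m₁)) (Hg.mulVec (ket m₂)) ∧
      m₁ + m₂ + t = x * y + h₁ + h₂ := by
  refine ⟨t + x * (1 - y) + h₁ + p, x + h₂ + p,
    (Complex.I ^ h₁.val * (-1) ^ (h₁.val * ((t + x * (1 - y)).val + 1)))
      * (Complex.I ^ h₂.val * (-1) ^ (h₂.val * (x.val + 1))), ?_, ?_, ?_⟩
  · simp [norm_mul, norm_pow, Complex.norm_I]
  · rw [Hket, Hket, Hket, Hket, ← Matrix.mulVec_mulVec, ← Matrix.mulVec_mulVec,
      CNOTpow, kron_tens, Ypow, Ypow, tens_smul, Matrix.mulVec_smul, kron_tens,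
      Zpow, Zpow]
  · revert x y t h₁ h₂ p; decide
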